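/- Let f(β) = √(1 + β·SNR) for β ∈ [0, T/M), with SNR, T, M > 0 and constants 0 < a ≤ c, 0 < b ≤ d. Define A(β) = (T/M − β)·(erf(a f(β))·erf(b f(β)))/(erf(c f(β))·erf(d f(β))). Then any interior critical point β* of A satisfies (SNR/(√π f(β*)))·(T/M − β*)·( a·e^{-a²f(β*)²}/erf(a f(β*)) + b·e^{-b²f(β*)²}/erf(b f(β*)) − c·e^{-c²f(β*)²}/erf(c f(β*)) − d·e^{-d²f(β*)²}/erf(d f(β*)) ) = 1. -/

import Mathlib

open Real
noncomputable def erf (x : ℝ) : ℝ := (2 / Real.sqrt Real.pi) * ∫ t in (0:ℝ)..x, Real.exp (-t^2)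

lemma erf_hasDerivAt (x : ℝ) : HasDerivAt erf ((2 / Real.sqrt Real.pi) * Real.exp (-x^2)) x := by
  have hc : Continuous fun t : ℝ => Real.exp (-t^2) := by fun_prop
  have h : HasDerivAt (fun y => ∫ t in (0:ℝ)..y, Real.exp (-t^2)) (Real.exp (-x^2)) x :=
    intervalIntegral.integral_hasDerivAt_right (hc.intervalIntegrable _ _)
      (hc.stronglyMeasurableAtFilter _ _) hc.continuousAt
  exact h.const_mul _

lemma erf_pos {x : ℝ} (hx : 0 < x) : 0 < erf x := by
  unfold erf
  apply mul_pos (by positivity)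
  apply intervalIntegral.intervalIntegral_pos_of_pos_on
  · exact (by fun_prop : Continuous fun t : ℝ => Real.exp (-t^2)).intervalIntegrable _ _
  · intro t _; positivity
  · exact hx

theorem ASE_optimal_condition (a b c d SNR T M : ℝ)
    (ha : 0 < a) (hac : a ≤ c) (hb : 0 < b) (hbd : b ≤ d)
    (hSNR : 0 < SNR) (hT : 0 < T) (hM : 0 < M)
    (β : ℝ) (hβ : β ∈ Set.Ioo (0:ℝ) (T / M))
    (hcrit : HasDerivAt
      (fun β : ℝ => (T / M - β) *
        (erf (a * Real.sqrt (1 + β * SNR)) * erf (b * Real.sqrt (1 + β * SNR))) /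
          (erf (c * Real.sqrt (1 + β * SNR)) * erf (d * Real.sqrt (1 + β * SNR))))
      0 β) :
    (SNR / (Real.sqrt Real.pi * Real.sqrt (1 + β * SNR))) * (T / M - β) *
      (a * Real.exp (-(a^2 * Real.sqrt (1 + β * SNR)^2)) / erf (a * Real.sqrt (1 + β * SNR))
        + b * Real.exp (-(b^2 * Real.sqrt (1 + β * SNR)^2)) / erf (b * Real.sqrt (1 + β * SNR))
        - c * Real.exp (-(c^2 * Real.sqrt (1 + β * SNR)^2)) / erf (c * Real.sqrt (1 + β * SNR))
        - d * Real.exp (-(d^2 * Real.sqrt (1 + β * SNR)^2)) / erf (d * Real.sqrt (1 + β * SNR)))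
      = 1 := by
  obtain ⟨hβ0, hβT⟩ := hβ
  have hs0 : (0:ℝ) < 1 + β * SNR := by nlinarith
  set s : ℝ := Real.sqrt (1 + β * SNR) with hsdef
  have hspos : 0 < s := Real.sqrt_pos.2 hs0
  have hs2 : s ^ 2 = 1 + β * SNR := Real.sq_sqrt hs0.le
  have hg : HasDerivAt (fun x : ℝ => Real.sqrt (1 + x * SNR)) (SNR / (2 * s)) β := by
    have h1 : HasDerivAt (fun x : ℝ => 1 + x * SNR) SNR β := by
      simpa using ((hasDerivAt_id β).mul_const SNR).const_add 1
    simpa using h1.sqrt (ne_of_gt hs0)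
  have hw : (0:ℝ) < Real.sqrt Real.pi := Real.sqrt_pos.2 Real.pi_pos
  -- derivative of each erf term
  have hk : ∀ k : ℝ, HasDerivAt (fun x : ℝ => erf (k * Real.sqrt (1 + x * SNR)))
      ((2 / Real.sqrt Real.pi) * Real.exp (-(k * s)^2) * (k * (SNR / (2 * s)))) β := by
    intro k
    have h := (erf_hasDerivAt (k * s)).comp β (hg.const_mul k)
    exact h
  set ea := erf (a * s); set eb := erf (b * s); set ec := erf (c * s); set ed := erf (d * s)
  have hc0 : 0 < c := lt_of_lt_of_le ha hac
  have hd0 : 0 < d := lt_of_lt_of_le hb hbd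
  have hea : 0 < ea := erf_pos (by positivity)
  have heb : 0 < eb := erf_pos (by positivity)
  have hec : 0 < ec := erf_pos (by positivity)
  have hed : 0 < ed := erf_pos (by positivity)
  set Da := (2 / Real.sqrt Real.pi) * Real.exp (-(a * s)^2) * (a * (SNR / (2 * s)))
  set Db := (2 / Real.sqrt Real.pi) * Real.exp (-(b * s)^2) * (b * (SNR / (2 * s)))
  set Dc := (2 / Real.sqrt Real.pi) * Real.exp (-(c * s)^2) * (c * (SNR / (2 * s)))
  set Dd := (2 / Real.sqrt Real.pi) * Real.exp (-(d * s)^2) * (d * (SNR / (2 * s)))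
  have hP : HasDerivAt (fun x : ℝ =>
      erf (a * Real.sqrt (1 + x * SNR)) * erf (b * Real.sqrt (1 + x * SNR)))
      (Da * eb + ea * Db) β := (hk a).mul (hk b)
  have hQ : HasDerivAt (fun x : ℝ =>
      erf (c * Real.sqrt (1 + x * SNR)) * erf (d * Real.sqrt (1 + x * SNR)))
      (Dc * ed + ec * Dd) β := (hk c).mul (hk d)
  have hu : HasDerivAt (fun x : ℝ => T / M - x) (-1) β := by
    simpa using (hasDerivAt_id β).const_sub (T / M)
  have hN : HasDerivAt (fun x : ℝ => (T / M - x) *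
      (erf (a * Real.sqrt (1 + x * SNR)) * erf (b * Real.sqrt (1 + x * SNR))))
      ((-1) * (ea * eb) + (T / M - β) * (Da * eb + ea * Db)) β := hu.mul hP
  have hQne : ec * ed ≠ 0 := by positivity
  have hF := hN.div hQ hQne
  have hD := (hcrit.unique hF).symm
  rw [← hsdef] at hD
  rw [div_eq_zero_iff] at hD
  have hD' : ((-1) * (ea * eb) + (T / M - β) * (Da * eb + ea * Db)) * (ec * ed) -
      (T / M - β) * (ea * eb) * (Dc * ed + ec * Dd) = 0 := by
    rcases hD with h | h
    · exact h
    · exact absurd h (pow_ne_zero _ hQne)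
  -- now algebra
  have hEa : Real.exp (-(a^2 * s^2)) = Real.exp (-(a*s)^2) := by ring_nf
  have hEb : Real.exp (-(b^2 * s^2)) = Real.exp (-(b*s)^2) := by ring_nf
  have hEc : Real.exp (-(c^2 * s^2)) = Real.exp (-(c*s)^2) := by ring_nf
  have hEd : Real.exp (-(d^2 * s^2)) = Real.exp (-(d*s)^2) := by ring_nf
  rw [hEa, hEb, hEc, hEd]
  simp only [Da, Db, Dc, Dd] at hD'
  field_simp at hD' ⊢
  ring_nf at hD' ⊢
  linarith [hD']
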